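/- Every pseudonorm defined on a subgroup H of an abelian group G extends to a pseudonorm on G. -/

import Mathlib

open AddSubgroup

section PseudonormAux

variable {G : Type} [AddCommGroup G]

/-- A partial pseudonorm: a subgroup together with a function that is a
pseudonorm on that subgroup (values outside are irrelevant). -/
structure PPN (G : Type) [AddCommGroup G] where
  K : AddSubgroup G
  q : G → ℝ
  zero : q 0 = 0
  neg : ∀ x ∈ K, q (-x) = q x
  tri : ∀ x ∈ K, ∀ y ∈ K, q (x + y) ≤ q x + q y
  nonneg : ∀ x ∈ K, 0 ≤ q x

instance : Preorder (PPN G) where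
  le a b := a.K ≤ b.K ∧ ∀ x ∈ a.K, a.q x = b.q x
  le_refl a := ⟨le_rfl, fun _ _ => rfl⟩
  le_trans a b c hab hbc :=
    ⟨hab.1.trans hbc.1, fun x hx => (hab.2 x hx).trans (hbc.2 x (hab.1 hx))⟩

lemma PPN.zsmul_le (e : PPN G) (m : ℤ) {x : G} (hx : x ∈ e.K) :
    e.q (m • x) ≤ |m| * e.q x := by
  have hnat : ∀ n : ℕ, e.q ((n : ℤ) • x) ≤ (n : ℝ) * e.q x := by
    intro n
    induction n with
    | zero => simp [e.zero]
    | succ n ih =>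
        have h1 : ((n : ℤ) + 1) • x = (n : ℤ) • x + x := by
          rw [add_smul, one_smul]
        have h2 : e.q ((n : ℤ) • x + x) ≤ e.q ((n : ℤ) • x) + e.q x :=
          e.tri _ (zsmul_mem hx _) _ hx
        push_cast
        rw [h1]
        calc e.q ((n : ℤ) • x + x) ≤ e.q ((n : ℤ) • x) + e.q x := h2
          _ ≤ (n : ℝ) * e.q x + e.q x := by linarith
          _ = ((n : ℝ) + 1) * e.q x := by ring
  rcases le_or_gt 0 m with hm | hm
  · obtain ⟨n, rfl⟩ := Int.eq_ofNat_of_zero_le hm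
    simpa using hnat n
  · obtain ⟨n, rfl⟩ : ∃ n : ℕ, m = -(n : ℤ) := ⟨m.natAbs, by omega⟩
    have : e.q ((-(n : ℤ)) • x) = e.q ((n : ℤ) • x) := by
      rw [neg_smul]
      exact e.neg _ (zsmul_mem hx _)
    rw [this]
    simpa using hnat n

/-- One-step extension: any partial pseudonorm can be extended to include one
more element. -/
lemma PPN.step (e : PPN G) (g : G) : ∃ e' : PPN G, e ≤ e' ∧ g ∈ e'.K := by
  classical
  -- the constant controlling multiples of `g`
  obtain ⟨c, hc0, hkey⟩ :
      ∃ c : ℝ, 0 ≤ c ∧ ∀ n : ℤ, n • g ∈ e.K → e.q (n • g) ≤ |n| * c := by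
    by_cases hS : ∃ n : ℕ, 0 < n ∧ (n : ℤ) • g ∈ e.K
    · set n₀ := Nat.find hS with hn₀def
      obtain ⟨hn₀pos, hn₀mem⟩ := Nat.find_spec hS
      rw [← hn₀def] at hn₀pos hn₀mem
      refine ⟨e.q ((n₀ : ℤ) • g) / n₀,
        div_nonneg (e.nonneg _ hn₀mem) (by exact_mod_cast hn₀pos.le), ?_⟩
      intro n hn
      -- n₀ divides n
      have hdvd : (n₀ : ℤ) ∣ n := by
        by_contra hnd
        have hr : n % (n₀ : ℤ) ≠ 0 := fun h => hnd (Int.dvd_of_emod_eq_zero h)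
        have hrmem : (n % (n₀ : ℤ)) • g ∈ e.K := by
          have : (n % (n₀ : ℤ)) = n - (n₀ : ℤ) * (n / (n₀ : ℤ)) := by
            rw [Int.emod_def]
          rw [this, sub_smul, mul_comm, mul_smul]
          exact sub_mem hn (zsmul_mem hn₀mem _)
        have hrpos : 0 < (n % (n₀ : ℤ)).toNat := by
          have := Int.emod_nonneg n (by exact_mod_cast hn₀pos.ne' : (n₀ : ℤ) ≠ 0)
          omega
        have hrlt : (n % (n₀ : ℤ)).toNat < n₀ := by
          have := Int.emod_lt_of_pos n (by exact_mod_cast hn₀pos : (0:ℤ) < n₀)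
          omega
        have : ((n % (n₀ : ℤ)).toNat : ℤ) • g ∈ e.K := by
          have h' : ((n % (n₀ : ℤ)).toNat : ℤ) = n % (n₀ : ℤ) := by
            have := Int.emod_nonneg n (by exact_mod_cast hn₀pos.ne' : (n₀ : ℤ) ≠ 0)
            omega
          rw [h']; exact hrmem
        exact Nat.find_min hS (hn₀def ▸ hrlt) ⟨hrpos, this⟩
      obtain ⟨d, rfl⟩ := hdvd
      have hsmul : ((n₀ : ℤ) * d) • g = d • ((n₀ : ℤ) • g) := by
        rw [mul_comm, mul_smul]
      rw [hsmul]
      calc e.q (d • ((n₀ : ℤ) • g)) ≤ |d| * e.q ((n₀ : ℤ) • g) := e.zsmul_le d hn₀mem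
        _ = |(n₀ : ℤ) * d| * (e.q ((n₀ : ℤ) • g) / n₀) := by
            rw [abs_mul]
            have : |(n₀ : ℤ)| = (n₀ : ℤ) := abs_of_nonneg (by positivity)
            rw [this]
            push_cast
            field_simp
    · refine ⟨0, le_rfl, ?_⟩
      intro n hn
      have hn0 : n = 0 := by
        by_contra h
        exact hS ⟨n.natAbs, by omega, by
          rcases le_or_gt 0 n with h' | h'
          · rw [show ((n.natAbs : ℤ)) = n by omega]; exact hn
          · rw [show ((n.natAbs : ℤ)) = -n by omega, neg_smul]
            exact neg_mem hn⟩
      simp [hn0, e.zero]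
  -- the candidate values set
  set D : G → Set ℝ :=
    fun x => {r : ℝ | ∃ k ∈ e.K, ∃ n : ℤ, x = k + n • g ∧ r = e.q k + |(n : ℝ)| * c}
    with hD
  have hbdd : ∀ x, BddBelow (D x) := by
    intro x
    refine ⟨0, ?_⟩
    rintro r ⟨k, hk, n, -, rfl⟩
    have := e.nonneg k hk
    positivity
  set q' : G → ℝ := fun x => sInf (D x) with hq'
  have hmemD : ∀ x k, k ∈ e.K → ∀ n : ℤ, x = k + n • g → (e.q k + |(n:ℝ)| * c) ∈ D x := by
    intro x k hk n hx
    exact ⟨k, hk, n, hx, rfl⟩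
  -- membership description of the new subgroup
  set K' : AddSubgroup G := e.K ⊔ AddSubgroup.zmultiples g with hK'
  have hmemK' : ∀ x, x ∈ K' ↔ ∃ k ∈ e.K, ∃ n : ℤ, x = k + n • g := by
    intro x
    rw [hK', AddSubgroup.mem_sup]
    constructor
    · rintro ⟨y, hy, z, hz, rfl⟩
      obtain ⟨n, rfl⟩ := AddSubgroup.mem_zmultiples_iff.mp hz
      exact ⟨y, hy, n, rfl⟩
    · rintro ⟨k, hk, n, rfl⟩
      exact ⟨k, hk, n • g, AddSubgroup.mem_zmultiples_iff.mpr ⟨n, rfl⟩, rfl⟩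
  have hne : ∀ x ∈ K', (D x).Nonempty := by
    intro x hx
    obtain ⟨k, hk, n, rfl⟩ := (hmemK' x).mp hx
    exact ⟨_, hmemD _ k hk n rfl⟩
  -- q' extends e.q
  have hext : ∀ x ∈ e.K, q' x = e.q x := by
    intro x hx
    refine le_antisymm ?_ ?_
    · have : (e.q x + |((0:ℤ):ℝ)| * c) ∈ D x := hmemD x x hx 0 (by simp)
      simpa using csInf_le (hbdd x) this
    · refine le_csInf ⟨_, hmemD x x hx 0 (by simp)⟩ ?_
      rintro r ⟨k, hk, n, hxk, rfl⟩
      have hng : n • g ∈ e.K := by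
        have : n • g = x - k := by rw [hxk]; abel
        rw [this]; exact sub_mem hx hk
      have h1 : e.q x ≤ e.q k + e.q (n • g) := by
        have := e.tri k hk (n • g) hng
        rwa [← hxk] at this
      have h2 : e.q (n • g) ≤ |(n:ℝ)| * c := by
        have := hkey n hng
        rwa [show |(n:ℝ)| = ((|n| : ℤ) : ℝ) by push_cast; rfl]
      linarith
  have hnonneg' : ∀ x ∈ K', 0 ≤ q' x := by
    intro x hx
    refine le_csInf (hne x hx) ?_
    rintro r ⟨k, hk, n, -, rfl⟩
    have := e.nonneg k hk
    positivity
  have hDneg : ∀ x, D x ⊆ D (-x) := by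
    intro x r
    rintro ⟨k, hk, n, rfl, rfl⟩
    refine ⟨-k, neg_mem hk, -n, by rw [neg_smul]; abel, ?_⟩
    rw [e.neg k hk]
    simp
  refine ⟨⟨K', q', ?_, ?_, ?_, ?_⟩, ⟨le_sup_left, fun x hx => (hext x hx).symm⟩,
    SetLike.le_def.mp le_sup_right (AddSubgroup.mem_zmultiples g)⟩
  · rw [hext 0 (zero_mem _), e.zero]
  · intro x _
    show sInf (D (-x)) = sInf (D x)
    have h1 : D x = D (-x) := le_antisymm (hDneg x) (by simpa using hDneg (-x))
    rw [h1]
  · intro x hx y hy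
    show sInf (D (x + y)) ≤ sInf (D x) + sInf (D y)
    have key : ∀ a ∈ D x, ∀ b ∈ D y, sInf (D (x + y)) ≤ a + b := by
      rintro a ⟨k, hk, n, rfl, rfl⟩ b ⟨k', hk', n', rfl, rfl⟩
      have hmem : (e.q (k + k') + |((n + n' : ℤ) : ℝ)| * c) ∈ D (k + n • g + (k' + n' • g)) := by
        refine hmemD _ (k + k') (add_mem hk hk') (n + n') (by rw [add_smul]; abel)
      calc sInf (D (k + n • g + (k' + n' • g))) ≤ e.q (k + k') + |((n + n' : ℤ) : ℝ)| * c :=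
            csInf_le (hbdd _) hmem
        _ ≤ (e.q k + e.q k') + (|(n:ℝ)| + |(n':ℝ)|) * c := by
            have h1 : e.q (k + k') ≤ e.q k + e.q k' := e.tri k hk k' hk'
            have h2 : |((n + n' : ℤ) : ℝ)| ≤ |(n:ℝ)| + |(n':ℝ)| := by
              push_cast
              exact abs_add_le _ _
            nlinarith [abs_nonneg ((n:ℝ)), abs_nonneg ((n':ℝ))]
        _ = (e.q k + |(n:ℝ)| * c) + (e.q k' + |(n':ℝ)| * c) := by ring
    have h1 : ∀ a ∈ D x, sInf (D (x + y)) - a ≤ sInf (D y) := by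
      intro a ha
      refine le_csInf (hne y hy) fun b hb => ?_
      have := key a ha b hb
      linarith
    have h2 : sInf (D (x + y)) - sInf (D y) ≤ sInf (D x) := by
      refine le_csInf (hne x hx) fun a ha => ?_
      have := h1 a ha
      linarith
    linarith
  · exact hnonneg'

end PseudonormAux

/-- Every pseudonorm on a subgroup `H` of an abelian group `G`
extends to a pseudonorm on `G`. -/
theorem pseudonorm_extends (G : Type) [AddCommGroup G] (H : AddSubgroup G)
    (p : H → ℝ) (hp0 : p 0 = 0) (hpneg : ∀ x : H, p (-x) = p x)
    (hptri : ∀ x y : H, p (x + y) ≤ p x + p y) (hpnonneg : ∀ x : H, 0 ≤ p x) :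
    ∃ q : G → ℝ, q 0 = 0 ∧ (∀ x : G, q (-x) = q x) ∧
      (∀ x y : G, q (x + y) ≤ q x + q y) ∧ (∀ x : G, 0 ≤ q x) ∧
      ∀ x : H, q (x : G) = p x := by
  classical
  -- base partial pseudonorm on `H`
  set p' : G → ℝ := fun x => if h : x ∈ H then p ⟨x, h⟩ else 0 with hp'
  have hp'eq : ∀ x : H, p' (x : G) = p x := by
    intro x; simp [hp', x.2]
  have hp'mem : ∀ (x : G) (hx : x ∈ H), p' x = p ⟨x, hx⟩ := fun x hx => dif_pos hx
  set e₀ : PPN G :=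
    { K := H
      q := p'
      zero := by simpa using hp'eq 0 |>.trans hp0
      neg := by
        intro x hx
        rw [hp'mem (-x) (neg_mem hx), hp'mem x hx]
        exact hpneg ⟨x, hx⟩
      tri := by
        intro x hx y hy
        rw [hp'mem (x + y) (add_mem hx hy), hp'mem x hx, hp'mem y hy]
        exact hptri ⟨x, hx⟩ ⟨y, hy⟩
      nonneg := by
        intro x hx
        rw [hp'mem x hx]
        exact hpnonneg ⟨x, hx⟩ }
    with he₀def
  set s : Set (PPN G) := {e | H ≤ e.K ∧ ∀ x : H, e.q (x : G) = p x} with hs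
  have he₀ : e₀ ∈ s := ⟨le_rfl, hp'eq⟩
  -- chains have upper bounds in `s`
  have hchainub : ∀ c ⊆ s, IsChain (· ≤ ·) c → ∀ y ∈ c, ∃ ub ∈ s, ∀ z ∈ c, z ≤ ub := by
    intro c hcs hchain y hy
    have hdir : ∀ a ∈ c, ∀ b ∈ c, ∃ d ∈ c, a ≤ d ∧ b ≤ d := by
      intro a ha b hb
      rcases hchain.total ha hb with h | h
      · exact ⟨b, hb, h, le_rfl⟩
      · exact ⟨a, ha, le_rfl, h⟩
    set Kc : AddSubgroup G :=
      { carrier := ⋃ e ∈ c, (e.K : Set G)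
        zero_mem' := Set.mem_biUnion hy (zero_mem y.K)
        add_mem' := by
          rintro a b ha hb
          obtain ⟨e1, he1, hae⟩ := Set.mem_iUnion₂.mp ha
          obtain ⟨e2, he2, hbe⟩ := Set.mem_iUnion₂.mp hb
          obtain ⟨d, hd, h1, h2⟩ := hdir e1 he1 e2 he2
          exact Set.mem_biUnion hd (add_mem (h1.1 hae) (h2.1 hbe))
        neg_mem' := by
          rintro a ha
          obtain ⟨e1, he1, hae⟩ := Set.mem_iUnion₂.mp ha
          exact Set.mem_biUnion he1 (neg_mem hae) } with hKc
    have hmemKc : ∀ x : G, x ∈ Kc ↔ ∃ e ∈ c, x ∈ e.K := by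
      intro x
      constructor
      · intro hx
        obtain ⟨e, he, hxe⟩ := Set.mem_iUnion₂.mp hx
        exact ⟨e, he, hxe⟩
      · rintro ⟨e, he, hxe⟩; exact Set.mem_biUnion he hxe
    classical
    set qc : G → ℝ := fun x =>
      if h : ∃ e, e ∈ c ∧ x ∈ e.K then h.choose.q x else 0 with hqc
    have hcompat : ∀ a ∈ c, ∀ x ∈ a.K, qc x = a.q x := by
      intro a ha x hx
      have hex : ∃ e, e ∈ c ∧ x ∈ e.K := ⟨a, ha, hx⟩
      have h1 : qc x = hex.choose.q x := by rw [hqc]; exact dif_pos hex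
      obtain ⟨hec, hxe⟩ := hex.choose_spec
      rw [h1]
      rcases hchain.total hec ha with h | h
      · exact h.2 x hxe
      · exact (h.2 x hx).symm
    have hKcle : ∀ a ∈ c, a.K ≤ Kc := by
      intro a ha x hx
      exact Set.mem_biUnion ha hx
    refine ⟨⟨Kc, qc, ?_, ?_, ?_, ?_⟩, ⟨?_, ?_⟩, ?_⟩
    · rw [hcompat y hy 0 (zero_mem _), y.zero]
    · intro x hx
      obtain ⟨e, he, hxe⟩ := (hmemKc x).mp hx
      rw [hcompat e he (-x) (neg_mem hxe), hcompat e he x hxe, e.neg x hxe]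
    · intro x hx z hz
      obtain ⟨e1, he1, hxe⟩ := (hmemKc x).mp hx
      obtain ⟨e2, he2, hze⟩ := (hmemKc z).mp hz
      obtain ⟨d, hd, h1, h2⟩ := hdir e1 he1 e2 he2
      rw [hcompat d hd x (h1.1 hxe), hcompat d hd z (h2.1 hze),
        hcompat d hd (x + z) (add_mem (h1.1 hxe) (h2.1 hze))]
      exact d.tri x (h1.1 hxe) z (h2.1 hze)
    · intro x hx
      obtain ⟨e, he, hxe⟩ := (hmemKc x).mp hx
      rw [hcompat e he x hxe]
      exact e.nonneg x hxe
    · exact le_trans (hcs hy).1 (hKcle y hy)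
    · intro x
      show qc (x : G) = p x
      rw [hcompat y hy (x : G) ((hcs hy).1 x.2)]
      exact (hcs hy).2 x
    · intro z hz
      exact ⟨hKcle z hz, fun x hx => (hcompat z hz x hx).symm⟩
  obtain ⟨m, -, hm⟩ := zorn_le_nonempty₀ s hchainub e₀ he₀
  have htop : ∀ x : G, x ∈ m.K := by
    intro x
    obtain ⟨e', hme', hxe'⟩ := m.step x
    have he's : e' ∈ s := by
      refine ⟨le_trans hm.1.1 hme'.1, fun z => ?_⟩
      rw [← hme'.2 (z : G) (hm.1.1 z.2)]
      exact hm.1.2 z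
    exact (hm.2 he's hme').1 hxe'
  refine ⟨m.q, m.zero, fun x => m.neg x (htop x),
    fun x y => m.tri x (htop x) y (htop y), fun x => m.nonneg x (htop x), fun x => hm.1.2 x⟩
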